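/- For every spanoid S on a finite ground set X: f-rank(S) ≤ LP^entropy(S) ≤ rank(S). -/

import Mathlib

open scoped BigOperators

/-- A spanoid on ground set `X`: a set of inference rules `(A, i)`,
read as "`A` spans `i`". -/
abbrev SpanoidOn (X : Type) : Type := Set (Set X × X)

/-- The span of `T`: the smallest superset `T'` of `T` such that whenever `(A, i)` is a
rule with `A ⊆ T'`, also `i ∈ T'`. -/
def sSpan {X : Type} (S : SpanoidOn X) (T : Set X) : Set X :=
  ⋂₀ {T' : Set X | T ⊆ T' ∧ ∀ p ∈ S, p.1 ⊆ T' → p.2 ∈ T'}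

/-- The rank of a spanoid: the minimum size of a subset spanning the whole ground set. -/
noncomputable def sRank {X : Type} [Fintype X] (S : SpanoidOn X) : ℕ :=
  sInf {k : ℕ | ∃ T : Set X, T.ncard = k ∧ sSpan S T = Set.univ}

/-- A set is closed if it equals its own span. -/
def sClosed {X : Type} (S : SpanoidOn X) (B : Set X) : Prop := sSpan S B = B

/-- A set is open if its complement is closed. -/
def sOpen {X : Type} (S : SpanoidOn X) (B : Set X) : Prop := sClosed S Bᶜ

/-- A code `C ⊆ K^X` is consistent with the spanoid `S` if for every rule `(A, i)` of `S`
there is a function `g` with `c i = g (c|_A)` for all codewords `c ∈ C`. -/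
def sConsistent {X K : Type} (S : SpanoidOn X) (C : Set (X → K)) : Prop :=
  ∀ p ∈ S, ∃ g : (↥p.1 → K) → K, ∀ c ∈ C, c p.2 = g (fun a => c a.1)

/-- The functional rank of a spanoid: the supremum of `log |C| / log |Σ|` over all finite
alphabets `Σ` (of size at least 2) and all codes `C ⊆ Σ^X` consistent with `S`. -/
noncomputable def sFrank {X : Type} (S : SpanoidOn X) : ℝ :=
  sSup {d : ℝ | ∃ m : ℕ, 2 ≤ m ∧ ∃ C : Set (X → Fin m),
    sConsistent S C ∧ d = Real.log (Nat.card C) / Real.log m}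

/-- Feasibility for the entropy linear program of a spanoid. -/
def sEntFeasible {X : Type} (S : SpanoidOn X) (f : Set X → ℝ) : Prop :=
  f ∅ = 0 ∧ (∀ i : X, f {i} ≤ 1) ∧
  (∀ A B : Set X, f (A ∪ B) + f (A ∩ B) ≤ f A + f B) ∧
  (∀ A B : Set X, A ⊆ B → f A ≤ f B) ∧
  (∀ A : Set X, ∀ i ∈ sSpan S A, f (A ∪ {i}) = f A)

/-- The optimum of the entropy linear program: maximize `f(X)` over feasible `f`. -/
noncomputable def sLPentropy {X : Type} (S : SpanoidOn X) : ℝ :=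
  sSup {y : ℝ | ∃ f : Set X → ℝ, sEntFeasible S f ∧ y = f Set.univ}

/-- The optimum of the covering linear program: minimize `∑ i, x i` over `x ≥ 0` such that
`∑_{i ∈ B} x i ≥ 1` for every nonempty open set `B`. -/
noncomputable def sLPcover {X : Type} [Fintype X] (S : SpanoidOn X) : ℝ :=
  sInf {y : ℝ | ∃ x : X → ℝ, (∀ i, 0 ≤ x i) ∧
    (∀ B : Set X, B.Nonempty → sOpen S B → 1 ≤ ∑ i, B.indicator x i) ∧
    y = ∑ i, x i}

/-- A spanoid on `[n]` is a `q`-LCS with error-tolerance `δ` if every `i` is spanned by at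
least `δ n` pairwise disjoint `q`-element subsets. -/
def sIsLCS {n : ℕ} (q : ℕ) (δ : ℝ) (S : SpanoidOn (Fin n)) : Prop :=
  ∀ i : Fin n, ∃ M : Finset (Finset (Fin n)),
    δ * n ≤ (M.card : ℝ) ∧
    (∀ A ∈ M, A.card = q) ∧
    ((M : Set (Finset (Fin n))).Pairwise fun A B => Disjoint A B) ∧
    ∀ A ∈ M, ((A : Set (Fin n)), i) ∈ S

open scoped Classical

lemma subset_sSpan {X : Type} (S : SpanoidOn X) (T : Set X) : T ⊆ sSpan S T := by
  intro x hx T' hT'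
  exact hT'.1 hx

lemma sSpan_mono {X : Type} (S : SpanoidOn X) {T U : Set X} (h : T ⊆ U) :
    sSpan S T ⊆ sSpan S U := by
  intro x hx T' hT'
  exact hx T' ⟨h.trans hT'.1, hT'.2⟩

lemma sSpan_le {X : Type} (S : SpanoidOn X) {T T' : Set X} (h1 : T ⊆ T')
    (h2 : ∀ p ∈ S, p.1 ⊆ T' → p.2 ∈ T') : sSpan S T ⊆ T' :=
  Set.sInter_subset_of_mem ⟨h1, h2⟩

lemma sSpan_univ {X : Type} (S : SpanoidOn X) : sSpan S Set.univ = Set.univ :=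
  Set.eq_univ_of_univ_subset (subset_sSpan S Set.univ)

lemma feasible_le_rank {X : Type} [Fintype X] (S : SpanoidOn X) (f : Set X → ℝ)
    (hf : sEntFeasible S f) : f Set.univ ≤ (sRank S : ℝ) := by
  obtain ⟨h0, h1, hsub, hmono, hspan⟩ := hf
  have hne : {k : ℕ | ∃ T : Set X, T.ncard = k ∧ sSpan S T = Set.univ}.Nonempty :=
    ⟨(Set.univ : Set X).ncard, Set.univ, rfl, sSpan_univ S⟩
  obtain ⟨T, hTcard, hTspan⟩ := Nat.sInf_mem hne
  -- subadditivity: f E ≤ E.ncard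
  have subadd : ∀ E : Set X, f E ≤ (E.ncard : ℝ) := by
    intro E
    refine Set.Finite.induction_on (motive := fun E _ => f E ≤ (E.ncard : ℝ)) E (Set.toFinite E)
      (by simp [h0]) ?_
    intro a E' ha hE' ih
    have h2 := hsub {a} E'
    have h3 : (0:ℝ) ≤ f ({a} ∩ E') := by
      have := hmono ∅ ({a} ∩ E') (Set.empty_subset _)
      linarith [h0]
    have h4 : ({a} : Set X) ∪ E' = insert a E' := (Set.insert_eq a E').symm
    rw [Set.ncard_insert_of_notMem ha hE']
    push_cast
    rw [h4] at h2
    linarith [h1 a, ih]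
  -- span absorption
  have habs : ∀ E : Set X, E ⊆ sSpan S T → f (T ∪ E) = f T := by
    intro E
    refine Set.Finite.induction_on
      (motive := fun E _ => E ⊆ sSpan S T → f (T ∪ E) = f T) E (Set.toFinite E)
      (by intro _; simp) ?_
    intro a E' ha hE' ih hsub'
    have hE'sub : E' ⊆ sSpan S T := fun x hx => hsub' (Set.mem_insert_of_mem a hx)
    have haT : a ∈ sSpan S (T ∪ E') :=
      sSpan_mono S Set.subset_union_left (hsub' (Set.mem_insert a E'))
    have heq : T ∪ insert a E' = (T ∪ E') ∪ {a} := by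
      rw [Set.union_singleton, Set.union_insert]
    rw [heq, hspan (T ∪ E') a haT, ih hE'sub]
  have := habs Set.univ (by rw [hTspan])
  rw [Set.union_univ] at this
  rw [this, sRank, ← hTcard]
  exact subadd T

open Classical in
noncomputable def fibF {X K : Type} (C' : Finset (X → K)) (A : Set X) (c : X → K) :
    Finset (X → K) :=
  C'.filter (fun c' => ∀ i ∈ A, c' i = c i)

noncomputable def fib {X K : Type} (C' : Finset (X → K)) (A : Set X) (c : X → K) : ℕ :=
  (fibF C' A c).card

variable {X K : Type}

lemma mem_fibF {C' : Finset (X → K)} {A : Set X} {c c' : X → K} :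
    c' ∈ fibF C' A c ↔ c' ∈ C' ∧ ∀ i ∈ A, c' i = c i := by
  unfold fibF
  exact Finset.mem_filter

lemma fib_pos {C' : Finset (X → K)} {A : Set X} {c : X → K} (hc : c ∈ C') :
    0 < fib C' A c :=
  Finset.card_pos.2 ⟨c, mem_fibF.2 ⟨hc, fun _ _ => rfl⟩⟩

lemma fib_le {C' : Finset (X → K)} {A : Set X} {c : X → K} :
    fib C' A c ≤ C'.card :=
  Finset.card_le_card (fun x hx => (mem_fibF.1 hx).1)

lemma fib_anti {C' : Finset (X → K)} {A B : Set X} (h : A ⊆ B) (c : X → K) :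
    fib C' B c ≤ fib C' A c :=
  Finset.card_le_card (fun x hx => by
    obtain ⟨h1, h2⟩ := mem_fibF.1 hx
    exact mem_fibF.2 ⟨h1, fun i hi => h2 i (h hi)⟩)

lemma fib_empty {C' : Finset (X → K)} {c : X → K} : fib C' ∅ c = C'.card := by
  unfold fib
  congr 1
  ext c'
  simp [mem_fibF]

lemma fib_univ {C' : Finset (X → K)} {c : X → K} (hc : c ∈ C') :
    fib C' Set.univ c = 1 := by
  unfold fib
  rw [Finset.card_eq_one]
  refine ⟨c, ?_⟩
  ext c'
  simp only [mem_fibF, Finset.mem_singleton, Set.mem_univ, forall_true_left]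
  constructor
  · rintro ⟨_, h⟩; exact funext h
  · rintro rfl; exact ⟨hc, fun _ => rfl⟩

lemma fibF_congr {C' : Finset (X → K)} {A : Set X} {c₁ c₂ : X → K}
    (h : ∀ i ∈ A, c₁ i = c₂ i) : fibF C' A c₁ = fibF C' A c₂ := by
  ext c'
  simp only [mem_fibF]
  exact and_congr_right fun _ => ⟨fun h' i hi => (h' i hi).trans (h i hi),
    fun h' i hi => (h' i hi).trans (h i hi).symm⟩

lemma fib_congr {C' : Finset (X → K)} {A : Set X} {c₁ c₂ : X → K}
    (h : ∀ i ∈ A, c₁ i = c₂ i) : fib C' A c₁ = fib C' A c₂ := by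
  unfold fib; rw [fibF_congr h]

lemma fib_cast_expand {C' : Finset (X → K)} {A : Set X} {c : X → K} :
    (fib C' A c : ℝ) = ∑ a ∈ C', if (∀ i ∈ A, a i = c i) then (1:ℝ) else 0 := by
  unfold fib fibF
  rw [Finset.card_filter]
  push_cast
  rfl

-- key submodularity counting inequality
lemma key_count (C' : Finset (X → K)) (A B : Set X) :
    ∑ c ∈ C', ((fib C' A c : ℝ) * fib C' B c) /
      ((fib C' (A ∪ B) c : ℝ) * (fib C' (A ∩ B) c : ℝ)) ≤ (C'.card : ℝ) := by
  classical
  have step1 : ∑ c ∈ C', ((fib C' A c : ℝ) * fib C' B c) /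
      ((fib C' (A ∪ B) c : ℝ) * (fib C' (A ∩ B) c : ℝ))
      = ∑ a ∈ C', ∑ b ∈ C', ∑ c ∈ C',
        ((if (∀ i ∈ A, a i = c i) then (1:ℝ) else 0) *
         (if (∀ i ∈ B, b i = c i) then (1:ℝ) else 0)) /
        ((fib C' (A ∪ B) c : ℝ) * (fib C' (A ∩ B) c : ℝ)) := by
    have eq1 : ∀ c ∈ C', ((fib C' A c : ℝ) * fib C' B c) /
        ((fib C' (A ∪ B) c : ℝ) * (fib C' (A ∩ B) c : ℝ))
        = ∑ a ∈ C', ∑ b ∈ C',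
          ((if (∀ i ∈ A, a i = c i) then (1:ℝ) else 0) *
           (if (∀ i ∈ B, b i = c i) then (1:ℝ) else 0)) /
          ((fib C' (A ∪ B) c : ℝ) * (fib C' (A ∩ B) c : ℝ)) := by
      intro c _
      rw [fib_cast_expand (A := A), fib_cast_expand (A := B), Finset.sum_mul_sum,
        Finset.sum_div]
      exact Finset.sum_congr rfl fun a _ => Finset.sum_div _ _ _
    calc ∑ c ∈ C', ((fib C' A c : ℝ) * fib C' B c) /
          ((fib C' (A ∪ B) c : ℝ) * (fib C' (A ∩ B) c : ℝ))
        = ∑ c ∈ C', ∑ a ∈ C', ∑ b ∈ C',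
          ((if (∀ i ∈ A, a i = c i) then (1:ℝ) else 0) *
           (if (∀ i ∈ B, b i = c i) then (1:ℝ) else 0)) /
          ((fib C' (A ∪ B) c : ℝ) * (fib C' (A ∩ B) c : ℝ)) :=
          Finset.sum_congr rfl eq1
      _ = ∑ a ∈ C', ∑ c ∈ C', ∑ b ∈ C',
          ((if (∀ i ∈ A, a i = c i) then (1:ℝ) else 0) *
           (if (∀ i ∈ B, b i = c i) then (1:ℝ) else 0)) /
          ((fib C' (A ∪ B) c : ℝ) * (fib C' (A ∩ B) c : ℝ)) := Finset.sum_comm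
      _ = ∑ a ∈ C', ∑ b ∈ C', ∑ c ∈ C',
          ((if (∀ i ∈ A, a i = c i) then (1:ℝ) else 0) *
           (if (∀ i ∈ B, b i = c i) then (1:ℝ) else 0)) /
          ((fib C' (A ∪ B) c : ℝ) * (fib C' (A ∩ B) c : ℝ)) :=
          Finset.sum_congr rfl fun a _ => Finset.sum_comm
  rw [step1]
  have inner_le : ∀ a ∈ C', ∀ b ∈ C', ∑ c ∈ C',
      ((if (∀ i ∈ A, a i = c i) then (1:ℝ) else 0) *
       (if (∀ i ∈ B, b i = c i) then (1:ℝ) else 0)) /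
      ((fib C' (A ∪ B) c : ℝ) * (fib C' (A ∩ B) c : ℝ))
      ≤ (if (∀ i ∈ A ∩ B, b i = a i) then 1 / (fib C' (A ∩ B) a : ℝ) else 0) := by
    intro a ha b hb
    set F : Finset (X → K) :=
      C'.filter (fun c => (∀ i ∈ A, a i = c i) ∧ (∀ i ∈ B, b i = c i)) with hF
    by_cases hFne : F.Nonempty
    · obtain ⟨c₀, hc₀⟩ := hFne
      rw [hF, Finset.mem_filter] at hc₀
      have hc₀C := hc₀.1
      have hc₀A := hc₀.2.1
      have hc₀B := hc₀.2.2
      have hab : ∀ i ∈ A ∩ B, b i = a i := fun i hi =>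
        (hc₀B i hi.2).trans (hc₀A i hi.1).symm
      rw [if_pos hab]
      have hterm : ∀ c ∈ C',
          ((if (∀ i ∈ A, a i = c i) then (1:ℝ) else 0) *
           (if (∀ i ∈ B, b i = c i) then (1:ℝ) else 0)) /
          ((fib C' (A ∪ B) c : ℝ) * (fib C' (A ∩ B) c : ℝ))
          = if ((∀ i ∈ A, a i = c i) ∧ (∀ i ∈ B, b i = c i))
            then 1 / ((F.card : ℝ) * (fib C' (A ∩ B) a : ℝ)) else 0 := by
        intro c hc
        by_cases h : (∀ i ∈ A, a i = c i) ∧ (∀ i ∈ B, b i = c i)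
        · rw [if_pos h, if_pos h.1, if_pos h.2, one_mul]
          have hab' : fibF C' (A ∪ B) c = F := by
            ext c'
            rw [mem_fibF, hF, Finset.mem_filter]
            refine and_congr_right fun _ => ?_
            constructor
            · intro h'
              exact ⟨fun i hi => (h.1 i hi).trans (h' i (Or.inl hi)).symm,
                fun i hi => (h.2 i hi).trans (h' i (Or.inr hi)).symm⟩
            · rintro ⟨h1, h2⟩ i hi
              rcases hi with hi | hi
              · exact (h1 i hi).symm.trans (h.1 i hi)
              · exact (h2 i hi).symm.trans (h.2 i hi)
          have hni : fib C' (A ∩ B) a = fib C' (A ∩ B) c :=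
            fib_congr (fun i hi => h.1 i hi.1)
          rw [show fib C' (A ∪ B) c = F.card from congrArg Finset.card hab', ← hni]
        · rw [if_neg h]
          rcases not_and_or.1 h with h' | h'
          · rw [if_neg h', zero_mul, zero_div]
          · rw [if_neg h', mul_zero, zero_div]
      rw [Finset.sum_congr rfl hterm, ← Finset.sum_filter, ← hF, Finset.sum_const,
        nsmul_eq_mul]
      have hFcard : (F.card : ℝ) ≠ 0 := by
        have : c₀ ∈ F := by rw [hF, Finset.mem_filter]; exact ⟨hc₀C, hc₀A, hc₀B⟩
        exact_mod_cast Finset.card_pos.2 ⟨c₀, this⟩ |>.ne'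
      have hNi : (fib C' (A ∩ B) a : ℝ) ≠ 0 := by
        exact_mod_cast (fib_pos (A := A ∩ B) ha).ne'
      have : (F.card : ℝ) * (1 / ((F.card : ℝ) * (fib C' (A ∩ B) a : ℝ)))
          = 1 / (fib C' (A ∩ B) a : ℝ) := by
        field_simp
      rw [this]
    · rw [Finset.not_nonempty_iff_eq_empty] at hFne
      have : ∀ c ∈ C',
          ((if (∀ i ∈ A, a i = c i) then (1:ℝ) else 0) *
           (if (∀ i ∈ B, b i = c i) then (1:ℝ) else 0)) /
          ((fib C' (A ∪ B) c : ℝ) * (fib C' (A ∩ B) c : ℝ)) = 0 := by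
        intro c hc
        by_cases h : (∀ i ∈ A, a i = c i) ∧ (∀ i ∈ B, b i = c i)
        · exfalso
          have : c ∈ F := by rw [hF, Finset.mem_filter]; exact ⟨hc, h⟩
          rw [hFne] at this
          exact absurd this (Finset.notMem_empty c)
        · rcases not_and_or.1 h with h' | h'
          · rw [if_neg h', zero_mul, zero_div]
          · rw [if_neg h', mul_zero, zero_div]
      rw [Finset.sum_eq_zero this]
      split
      · positivity
      · exact le_refl 0
  calc ∑ a ∈ C', ∑ b ∈ C', ∑ c ∈ C',
        ((if (∀ i ∈ A, a i = c i) then (1:ℝ) else 0) *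
         (if (∀ i ∈ B, b i = c i) then (1:ℝ) else 0)) /
        ((fib C' (A ∪ B) c : ℝ) * (fib C' (A ∩ B) c : ℝ))
      ≤ ∑ a ∈ C', ∑ b ∈ C',
        (if (∀ i ∈ A ∩ B, b i = a i) then 1 / (fib C' (A ∩ B) a : ℝ) else 0) :=
        Finset.sum_le_sum fun a ha => Finset.sum_le_sum fun b hb => inner_le a ha b hb
    _ ≤ ∑ _a ∈ C', (1 : ℝ) := by
        refine Finset.sum_le_sum fun a ha => ?_
        have : ∑ b ∈ C', (if (∀ i ∈ A ∩ B, b i = a i) then 1 / (fib C' (A ∩ B) a : ℝ) else 0)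
            = (fib C' (A ∩ B) a : ℝ) * (1 / (fib C' (A ∩ B) a : ℝ)) := by
          rw [← Finset.sum_filter, Finset.sum_const, nsmul_eq_mul]
          have hcard : (C'.filter (fun b => ∀ i ∈ A ∩ B, b i = a i)).card
              = fib C' (A ∩ B) a := rfl
          rw [hcard]
        rw [this]
        have hNi : (fib C' (A ∩ B) a : ℝ) ≠ 0 := by
          exact_mod_cast (fib_pos (A := A ∩ B) ha).ne'
        rw [mul_one_div, div_self hNi]
    _ = (C'.card : ℝ) := by rw [Finset.sum_const, nsmul_eq_mul, mul_one]

noncomputable def entH {X K : Type} (C' : Finset (X → K)) (A : Set X) : ℝ :=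
  Real.log C'.card - (∑ c ∈ C', Real.log (fib C' A c)) / C'.card

lemma fib_cast_pos {C' : Finset (X → K)} {A : Set X} {c : X → K} (hc : c ∈ C') :
    (0:ℝ) < (fib C' A c : ℝ) := by exact_mod_cast fib_pos hc

lemma entH_empty (C' : Finset (X → K)) : entH C' ∅ = 0 := by
  unfold entH
  rcases eq_or_ne C'.card 0 with h | h
  · rw [Finset.card_eq_zero] at h
    subst h
    simp
  · have : ∑ c ∈ C', Real.log (fib C' ∅ c) = C'.card * Real.log C'.card := by
      rw [Finset.sum_congr rfl fun c _ => by rw [fib_empty], Finset.sum_const,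
        nsmul_eq_mul]
    rw [this, mul_div_assoc, mul_div_cancel₀ _ (by exact_mod_cast h), sub_self]

lemma entH_univ (C' : Finset (X → K)) : entH C' Set.univ = Real.log C'.card := by
  unfold entH
  have : ∑ c ∈ C', Real.log (fib C' Set.univ c) = 0 :=
    Finset.sum_eq_zero fun c hc => by rw [fib_univ hc]; simp
  rw [this, zero_div, sub_zero]

lemma entH_mono (C' : Finset (X → K)) {A B : Set X} (h : A ⊆ B) :
    entH C' A ≤ entH C' B := by
  unfold entH
  rcases eq_or_ne C'.card 0 with h0 | h0
  · rw [Finset.card_eq_zero] at h0; subst h0; simp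
  have hn : (0:ℝ) < (C'.card : ℝ) := by positivity
  have hsum : ∑ c ∈ C', Real.log (fib C' B c) ≤ ∑ c ∈ C', Real.log (fib C' A c) :=
    Finset.sum_le_sum fun c hc =>
      Real.log_le_log (fib_cast_pos hc) (by exact_mod_cast fib_anti h c)
  have := (div_le_div_iff_of_pos_right hn).mpr hsum
  linarith

lemma entH_submod (C' : Finset (X → K)) (A B : Set X) :
    entH C' (A ∪ B) + entH C' (A ∩ B) ≤ entH C' A + entH C' B := by
  rcases eq_or_ne C'.card 0 with h0 | h0
  · rw [Finset.card_eq_zero] at h0; subst h0; simp [entH]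
  have hn : (0:ℝ) < (C'.card : ℝ) := by positivity
  have per : ∀ c ∈ C',
      Real.log (fib C' A c) + Real.log (fib C' B c)
        - (Real.log (fib C' (A ∪ B) c) + Real.log (fib C' (A ∩ B) c))
      ≤ ((fib C' A c : ℝ) * fib C' B c) /
        ((fib C' (A ∪ B) c : ℝ) * (fib C' (A ∩ B) c : ℝ)) - 1 := by
    intro c hc
    have h1 := fib_cast_pos (A := A) hc
    have h2 := fib_cast_pos (A := B) hc
    have h3 := fib_cast_pos (A := A ∪ B) hc
    have h4 := fib_cast_pos (A := A ∩ B) hc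
    have hlog := Real.log_le_sub_one_of_pos
      (show (0:ℝ) < ((fib C' A c : ℝ) * fib C' B c) /
        ((fib C' (A ∪ B) c : ℝ) * (fib C' (A ∩ B) c : ℝ)) by positivity)
    rw [Real.log_div (by positivity) (by positivity),
      Real.log_mul h1.ne' h2.ne', Real.log_mul h3.ne' h4.ne'] at hlog
    linarith
  have hsumle := Finset.sum_le_sum per
  rw [Finset.sum_sub_distrib, Finset.sum_add_distrib, Finset.sum_add_distrib,
    Finset.sum_sub_distrib, Finset.sum_const, nsmul_eq_mul, mul_one] at hsumle
  have hkey := key_count C' A B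
  have claim : ∑ c ∈ C', Real.log (fib C' A c) + ∑ c ∈ C', Real.log (fib C' B c)
      ≤ ∑ c ∈ C', Real.log (fib C' (A ∪ B) c)
        + ∑ c ∈ C', Real.log (fib C' (A ∩ B) c) := by linarith
  unfold entH
  have hdiv := (div_le_div_iff_of_pos_right hn).mpr claim
  rw [add_div, add_div] at hdiv
  linarith

lemma sum_inv_fib_le [Fintype K] (C' : Finset (X → K)) (i : X) :
    ∑ c ∈ C', 1 / (fib C' {i} c : ℝ) ≤ (Fintype.card K : ℝ) := by
  have expand : ∀ c ∈ C', 1 / (fib C' {i} c : ℝ)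
      = ∑ v ∈ (Finset.univ : Finset K), if c i = v then 1 / (fib C' {i} c : ℝ) else 0 := by
    intro c _
    rw [Finset.sum_ite_eq (Finset.univ : Finset K) (c i)
      (fun _ => 1 / (fib C' {i} c : ℝ)), if_pos (Finset.mem_univ _)]
  rw [Finset.sum_congr rfl expand, Finset.sum_comm]
  have inner : ∀ v ∈ (Finset.univ : Finset K),
      ∑ c ∈ C', (if c i = v then 1 / (fib C' {i} c : ℝ) else 0) ≤ 1 := by
    intro v _
    set G : Finset (X → K) := C'.filter (fun c => c i = v) with hG
    have hfib : ∀ c ∈ C', c i = v → fib C' {i} c = G.card := by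
      intro c hc hcv
      unfold fib
      congr 1
      ext c'
      rw [mem_fibF, hG, Finset.mem_filter]
      refine and_congr_right fun _ => ?_
      constructor
      · intro h'; rw [h' i rfl, hcv]
      · intro h' j hj
        rw [Set.mem_singleton_iff] at hj
        subst hj; rw [h', hcv]
    have : ∀ c ∈ C', (if c i = v then 1 / (fib C' {i} c : ℝ) else 0)
        = if c i = v then 1 / (G.card : ℝ) else 0 := by
      intro c hc
      by_cases h : c i = v
      · rw [if_pos h, if_pos h, hfib c hc h]
      · rw [if_neg h, if_neg h]
    rw [Finset.sum_congr rfl this, ← Finset.sum_filter, ← hG, Finset.sum_const,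
      nsmul_eq_mul]
    rcases eq_or_ne G.card 0 with h | h
    · rw [h]; norm_num
    · rw [mul_one_div, div_self (by exact_mod_cast h)]
  calc ∑ v ∈ (Finset.univ : Finset K), ∑ c ∈ C',
        (if c i = v then 1 / (fib C' {i} c : ℝ) else 0)
      ≤ ∑ _v ∈ (Finset.univ : Finset K), (1:ℝ) := Finset.sum_le_sum inner
    _ = (Fintype.card K : ℝ) := by
        rw [Finset.sum_const, nsmul_eq_mul, mul_one, Finset.card_univ]

lemma entH_singleton_le [Fintype K] (C' : Finset (X → K)) (i : X) :
    entH C' {i} ≤ Real.log (Fintype.card K) := by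
  rcases eq_or_ne C'.card 0 with h0 | h0
  · rw [Finset.card_eq_zero] at h0; subst h0
    simp only [entH]
    simp only [Finset.card_empty, Nat.cast_zero, Real.log_zero, Finset.sum_empty,
      zero_div, sub_zero]
    rcases Nat.eq_zero_or_pos (Fintype.card K) with h | h
    · rw [h]; simp
    · exact Real.log_natCast_nonneg _
  have hn : (0:ℝ) < (C'.card : ℝ) := by positivity
  obtain ⟨c₁, hc₁⟩ := Finset.card_pos.1 (Nat.pos_of_ne_zero h0)
  have hK : (0:ℝ) < (Fintype.card K : ℝ) := by
    have : Nonempty K := ⟨c₁ i⟩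
    exact_mod_cast Fintype.card_pos
  have per : ∀ c ∈ C',
      Real.log (C'.card) - Real.log (Fintype.card K) - Real.log (fib C' {i} c)
      ≤ (C'.card : ℝ) / (Fintype.card K : ℝ) * (1 / (fib C' {i} c : ℝ)) - 1 := by
    intro c hc
    have h1 := fib_cast_pos (A := ({i} : Set X)) hc
    have hlog := Real.log_le_sub_one_of_pos
      (show (0:ℝ) < (C'.card : ℝ) / ((Fintype.card K : ℝ) * (fib C' {i} c : ℝ)) by
        positivity)
    rw [Real.log_div hn.ne' (by positivity), Real.log_mul hK.ne' h1.ne'] at hlog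
    have : (C'.card : ℝ) / ((Fintype.card K : ℝ) * (fib C' {i} c : ℝ))
        = (C'.card : ℝ) / (Fintype.card K : ℝ) * (1 / (fib C' {i} c : ℝ)) := by
      field_simp
    rw [this] at hlog
    linarith
  have hsumle := Finset.sum_le_sum per
  rw [Finset.sum_sub_distrib, Finset.sum_sub_distrib, Finset.sum_const,
    Finset.sum_const, nsmul_eq_mul, nsmul_eq_mul, Finset.sum_sub_distrib,
    Finset.sum_const, nsmul_eq_mul, mul_one, ← Finset.mul_sum] at hsumle
  have hinv := sum_inv_fib_le C' i
  have hmul : (C'.card : ℝ) / (Fintype.card K : ℝ) * (∑ c ∈ C', 1 / (fib C' {i} c : ℝ))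
      ≤ (C'.card : ℝ) / (Fintype.card K : ℝ) * (Fintype.card K : ℝ) :=
    mul_le_mul_of_nonneg_left hinv (by positivity)
  rw [div_mul_cancel₀ _ hK.ne'] at hmul
  -- now: n * log n - n * log m - S ≤ 0
  have hfinal : (C'.card : ℝ) * Real.log (C'.card)
      - (C'.card : ℝ) * Real.log (Fintype.card K)
      - ∑ c ∈ C', Real.log (fib C' {i} c) ≤ 0 := by linarith
  unfold entH
  have h2 : Real.log (C'.card) - Real.log (Fintype.card K)
      ≤ (∑ c ∈ C', Real.log (fib C' {i} c)) / C'.card := by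
    rw [le_div_iff₀ hn]
    have heq : (Real.log (C'.card) - Real.log (Fintype.card K)) * (C'.card:ℝ)
        = (C'.card:ℝ) * Real.log (C'.card)
          - (C'.card:ℝ) * Real.log (Fintype.card K) := by ring
    rw [heq]
    linarith
  linarith

lemma span_determines (S : SpanoidOn X) (C : Set (X → K)) (hC : sConsistent S C)
    (A : Set X) {i : X} (hi : i ∈ sSpan S A) :
    ∀ c ∈ C, ∀ c' ∈ C, (∀ j ∈ A, c' j = c j) → c' i = c i := by
  have hsub : sSpan S A ⊆
      {j : X | ∀ c ∈ C, ∀ c' ∈ C, (∀ k ∈ A, c' k = c k) → c' j = c j} := by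
    refine sSpan_le S ?_ ?_
    · intro j hj c _ c' _ hagree
      exact hagree j hj
    · intro p hp hsubT c hc c' hc' hagree
      obtain ⟨g, hg⟩ := hC p hp
      rw [hg c hc, hg c' hc']
      congr 1
      funext a
      exact hsubT a.2 c hc c' hc' hagree
  exact hsub hi

lemma fib_insert_span (S : SpanoidOn X) (C : Set (X → K)) (hC : sConsistent S C)
    (C' : Finset (X → K)) (hmem : ∀ c, c ∈ C' ↔ c ∈ C)
    (A : Set X) {i : X} (hi : i ∈ sSpan S A) {c : X → K} (hc : c ∈ C') :
    fib C' (A ∪ {i}) c = fib C' A c := by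
  unfold fib
  congr 1
  ext c'
  rw [mem_fibF, mem_fibF]
  refine and_congr_right fun hc' => ?_
  constructor
  · intro h j hj
    exact h j (Or.inl hj)
  · intro h j hj
    rcases hj with hj | hj
    · exact h j hj
    · rw [Set.mem_singleton_iff] at hj
      subst hj
      exact span_determines S C hC A hi c ((hmem c).1 hc) c' ((hmem c').1 hc') h

lemma code_feasible [Fintype X] [Fintype K] (hK : 2 ≤ Fintype.card K)
    (S : SpanoidOn X) (C : Set (X → K)) (hC : sConsistent S C) :
    ∃ f : Set X → ℝ, sEntFeasible S f ∧
      f Set.univ = Real.log (Nat.card C) / Real.log (Fintype.card K) := by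
  haveI : Fintype ↥C := Set.Finite.fintype (Set.toFinite C)
  set C' := C.toFinset with hC'
  have hmem : ∀ c, c ∈ C' ↔ c ∈ C := fun c => Set.mem_toFinset
  have hcard : Nat.card ↥C = C'.card := by
    rw [Nat.card_coe_set_eq, Set.ncard_eq_toFinset_card']
  have hm : (0:ℝ) < Real.log (Fintype.card K) :=
    Real.log_pos (by exact_mod_cast lt_of_lt_of_le one_lt_two hK)
  refine ⟨fun A => entH C' A / Real.log (Fintype.card K),
    ⟨?_, ?_, ?_, ?_, ?_⟩, ?_⟩
  · show entH C' ∅ / Real.log (Fintype.card K) = 0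
    rw [entH_empty, zero_div]
  · intro i
    show entH C' {i} / Real.log (Fintype.card K) ≤ 1
    rw [div_le_one hm]
    exact entH_singleton_le C' i
  · intro A B
    show entH C' (A ∪ B) / _ + entH C' (A ∩ B) / _ ≤ entH C' A / _ + entH C' B / _
    rw [← add_div, ← add_div]
    exact div_le_div_of_nonneg_right (entH_submod C' A B) hm.le
  · intro A B h
    exact div_le_div_of_nonneg_right (entH_mono C' h) hm.le
  · intro A i hi
    show entH C' (A ∪ {i}) / _ = entH C' A / _
    have : entH C' (A ∪ {i}) = entH C' A := by
      unfold entH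
      congr 2
      exact Finset.sum_congr rfl fun c hc => by
        rw [fib_insert_span S C hC C' hmem A hi hc]
    rw [this]
  · show entH C' Set.univ / _ = _
    rw [entH_univ, hcard]


/-- For every spanoid, `f-rank(S) ≤ LP^entropy(S) ≤ rank(S)`. -/
theorem frank_le_LPentropy_le_rank {X : Type} [Fintype X] (S : SpanoidOn X) :
    sFrank S ≤ sLPentropy S ∧ sLPentropy S ≤ (sRank S : ℝ) := by

  have hub : ∀ y ∈ {y : ℝ | ∃ f : Set X → ℝ, sEntFeasible S f ∧ y = f Set.univ},
      y ≤ (sRank S : ℝ) := by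
    rintro y ⟨f, hf, rfl⟩
    exact feasible_le_rank S f hf
  have hzero : (0:ℝ) ∈ {y : ℝ | ∃ f : Set X → ℝ, sEntFeasible S f ∧ y = f Set.univ} := by
    refine ⟨fun _ => 0, ⟨rfl, fun _ => zero_le_one, fun _ _ => by norm_num,
      fun _ _ _ => le_refl 0, fun _ _ _ => rfl⟩, rfl⟩
  have hbdd : BddAbove {y : ℝ | ∃ f : Set X → ℝ, sEntFeasible S f ∧ y = f Set.univ} :=
    ⟨(sRank S : ℝ), hub⟩
  constructor
  · -- sFrank ≤ sLPentropy
    have hFne : {d : ℝ | ∃ m : ℕ, 2 ≤ m ∧ ∃ C : Set (X → Fin m),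
        sConsistent S C ∧ d = Real.log (Nat.card C) / Real.log m}.Nonempty := by
      refine ⟨0, 2, le_refl 2, ∅, fun p _ => ⟨fun _ => 0, fun c hc => absurd hc
        (Set.notMem_empty c)⟩, ?_⟩
      have : Nat.card ↥(∅ : Set (X → Fin 2)) = 0 := by simp
      rw [this]
      simp
    refine csSup_le hFne ?_
    rintro d ⟨m, hm, C, hcons, rfl⟩
    obtain ⟨f, hfeas, hfuniv⟩ := code_feasible (K := Fin m)
      (by rw [Fintype.card_fin]; exact hm) S C hcons
    rw [Fintype.card_fin] at hfuniv
    have : Real.log (Nat.card ↥C) / Real.log m = f Set.univ := hfuniv.symm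
    rw [this]
    exact le_csSup hbdd ⟨f, hfeas, rfl⟩
  · exact csSup_le ⟨0, hzero⟩ hub
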